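/- Let Λ_{A₃} be the A₃ root lattice, i.e. ℤ³ with Gram matrix [[2,−1,0],[−1,2,−1],[0,−1,2]]. Then the group SO₀(Λ_{A₃}) of determinant-1 automorphisms of Λ_{A₃} that induce the identity map on the discriminant group Λ_{A₃}*/Λ_{A₃} is isomorphic to the alternating group Alt(4); in particular it has order 12. -/

import Mathlib

/-!
STATEMENT 14: The group SO₀(Λ_{A₃}) of determinant-1 automorphisms of the A₃ root
lattice that induce the identity map on the discriminant group is isomorphic to the
alternating group Alt(4); in particular it has order 12.
-/

open Matrix

open Matrix

def IsIntVec {n : ℕ} (x : Fin n → ℚ) : Prop := ∀ i, ∃ c : ℤ, x i = (c : ℚ)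

lemma IsIntVec.add {n : ℕ} {u v : Fin n → ℚ} (hu : IsIntVec u) (hv : IsIntVec v) :
    IsIntVec (u + v) := by
  intro i
  obtain ⟨c, hc⟩ := hu i
  obtain ⟨d, hd⟩ := hv i
  exact ⟨c + d, by simp [hc, hd]⟩

lemma IsIntVec.neg {n : ℕ} {u : Fin n → ℚ} (hu : IsIntVec u) : IsIntVec (-u) := by
  intro i
  obtain ⟨c, hc⟩ := hu i
  exact ⟨-c, by simp [hc]⟩

lemma mapq_mul {n : ℕ} (M N : Matrix (Fin n) (Fin n) ℤ) :
    (M * N).map ((↑) : ℤ → ℚ) = M.map ((↑) : ℤ → ℚ) * N.map ((↑) : ℤ → ℚ) := by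
  ext i j
  simp [Matrix.mul_apply]

lemma mapq_one {n : ℕ} : ((1 : Matrix (Fin n) (Fin n) ℤ)).map ((↑) : ℤ → ℚ) = 1 :=
  Matrix.map_one _ Int.cast_zero Int.cast_one

lemma intvec_vecMul {n : ℕ} {x : Fin n → ℚ} (hx : IsIntVec x)
    (Z : Matrix (Fin n) (Fin n) ℤ) :
    IsIntVec (Matrix.vecMul x (Z.map ((↑) : ℤ → ℚ))) := by
  intro i
  choose c hc using hx
  refine ⟨∑ j, c j * Z j i, ?_⟩
  simp only [Matrix.vecMul, dotProduct, Matrix.map_apply]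
  push_cast
  exact Finset.sum_congr rfl fun j _ => by rw [hc j]

lemma dual_pres {n : ℕ} (Q : Matrix (Fin n) (Fin n) ℤ) (a : (Matrix (Fin n) (Fin n) ℤ)ˣ)
    (ha : (a : Matrix (Fin n) (Fin n) ℤ) * Q * (a : Matrix (Fin n) (Fin n) ℤ)ᵀ = Q)
    {x : Fin n → ℚ} (hx : IsIntVec (Matrix.vecMul x (Q.map ((↑) : ℤ → ℚ)))) :
    IsIntVec (Matrix.vecMul (Matrix.vecMul x ((a : Matrix (Fin n) (Fin n) ℤ).map ((↑) : ℤ → ℚ)))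
      (Q.map ((↑) : ℤ → ℚ))) := by
  have key : (a : Matrix (Fin n) (Fin n) ℤ) * Q = Q * ((a⁻¹ : (Matrix (Fin n) (Fin n) ℤ)ˣ) : Matrix (Fin n) (Fin n) ℤ)ᵀ := by
    have h1 : (a : Matrix (Fin n) (Fin n) ℤ)ᵀ * ((a⁻¹ : (Matrix (Fin n) (Fin n) ℤ)ˣ) : Matrix (Fin n) (Fin n) ℤ)ᵀ = 1 := by
      rw [← Matrix.transpose_mul, Units.inv_mul, Matrix.transpose_one]
    calc (a : Matrix (Fin n) (Fin n) ℤ) * Q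
        = ((a : Matrix (Fin n) (Fin n) ℤ) * Q * (a : Matrix (Fin n) (Fin n) ℤ)ᵀ) *
            ((a⁻¹ : (Matrix (Fin n) (Fin n) ℤ)ˣ) : Matrix (Fin n) (Fin n) ℤ)ᵀ := by
          rw [Matrix.mul_assoc, h1, Matrix.mul_one]
      _ = Q * ((a⁻¹ : (Matrix (Fin n) (Fin n) ℤ)ˣ) : Matrix (Fin n) (Fin n) ℤ)ᵀ := by rw [ha]
  rw [Matrix.vecMul_vecMul, ← mapq_mul, key, mapq_mul, ← Matrix.vecMul_vecMul]
  exact intvec_vecMul hx _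

def SOzero {n : ℕ} (Q : Matrix (Fin n) (Fin n) ℤ) : Subgroup (Matrix (Fin n) (Fin n) ℤ)ˣ where
  carrier := {U | (U : Matrix (Fin n) (Fin n) ℤ) * Q * (U : Matrix (Fin n) (Fin n) ℤ)ᵀ = Q ∧
      (U : Matrix (Fin n) (Fin n) ℤ).det = 1 ∧
      ∀ x : Fin n → ℚ, IsIntVec (Matrix.vecMul x (Q.map ((↑) : ℤ → ℚ))) →
        IsIntVec (Matrix.vecMul x ((U : Matrix (Fin n) (Fin n) ℤ).map ((↑) : ℤ → ℚ)) - x)}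
  one_mem' := by
    refine ⟨by simp, by simp, fun x hx i => ⟨0, ?_⟩⟩
    simp [mapq_one]
  mul_mem' := by
    rintro a b ⟨ha1, ha2, ha3⟩ ⟨hb1, hb2, hb3⟩
    have hab1 : ((a * b : (Matrix (Fin n) (Fin n) ℤ)ˣ) : Matrix (Fin n) (Fin n) ℤ) * Q *
        ((a * b : (Matrix (Fin n) (Fin n) ℤ)ˣ) : Matrix (Fin n) (Fin n) ℤ)ᵀ = Q := by
      rw [Units.val_mul, Matrix.transpose_mul]
      calc (a : Matrix (Fin n) (Fin n) ℤ) * b * Q * ((b : Matrix (Fin n) (Fin n) ℤ)ᵀ * (a : Matrix (Fin n) (Fin n) ℤ)ᵀ)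
          = (a : Matrix (Fin n) (Fin n) ℤ) * ((b : Matrix (Fin n) (Fin n) ℤ) * Q * (b : Matrix (Fin n) (Fin n) ℤ)ᵀ) * (a : Matrix (Fin n) (Fin n) ℤ)ᵀ := by
            noncomm_ring
        _ = Q := by rw [hb1, ha1]
    refine ⟨hab1, by rw [Units.val_mul, Matrix.det_mul, ha2, hb2, one_mul], fun x hx => ?_⟩
    have hy := dual_pres Q a ha1 hx
    set y := Matrix.vecMul x ((a : Matrix (Fin n) (Fin n) ℤ).map ((↑) : ℤ → ℚ)) with hydef
    have h1 : IsIntVec (Matrix.vecMul y ((b : Matrix (Fin n) (Fin n) ℤ).map ((↑) : ℤ → ℚ)) - y) :=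
      hb3 y hy
    have h2 : IsIntVec (y - x) := ha3 x hx
    have hrw : Matrix.vecMul x (((a * b : (Matrix (Fin n) (Fin n) ℤ)ˣ) : Matrix (Fin n) (Fin n) ℤ).map ((↑) : ℤ → ℚ)) - x =
        (Matrix.vecMul y ((b : Matrix (Fin n) (Fin n) ℤ).map ((↑) : ℤ → ℚ)) - y) + (y - x) := by
      rw [Units.val_mul, mapq_mul, ← Matrix.vecMul_vecMul, ← hydef]
      abel
    rw [hrw]
    exact h1.add h2
  inv_mem' := by
    rintro a ⟨ha1, ha2, ha3⟩
    have hi1 : ((a⁻¹ : (Matrix (Fin n) (Fin n) ℤ)ˣ) : Matrix (Fin n) (Fin n) ℤ) * Q *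
        ((a⁻¹ : (Matrix (Fin n) (Fin n) ℤ)ˣ) : Matrix (Fin n) (Fin n) ℤ)ᵀ = Q := by
      have h1 : (a : Matrix (Fin n) (Fin n) ℤ)ᵀ * ((a⁻¹ : (Matrix (Fin n) (Fin n) ℤ)ˣ) : Matrix (Fin n) (Fin n) ℤ)ᵀ = 1 := by
        rw [← Matrix.transpose_mul, Units.inv_mul, Matrix.transpose_one]
      have h2 : ((a⁻¹ : (Matrix (Fin n) (Fin n) ℤ)ˣ) : Matrix (Fin n) (Fin n) ℤ) * (a : Matrix (Fin n) (Fin n) ℤ) = 1 := Units.inv_mul a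
      calc ((a⁻¹ : (Matrix (Fin n) (Fin n) ℤ)ˣ) : Matrix (Fin n) (Fin n) ℤ) * Q * ((a⁻¹ : (Matrix (Fin n) (Fin n) ℤ)ˣ) : Matrix (Fin n) (Fin n) ℤ)ᵀ
          = ((a⁻¹ : (Matrix (Fin n) (Fin n) ℤ)ˣ) : Matrix (Fin n) (Fin n) ℤ) * ((a : Matrix (Fin n) (Fin n) ℤ) * Q * (a : Matrix (Fin n) (Fin n) ℤ)ᵀ) * ((a⁻¹ : (Matrix (Fin n) (Fin n) ℤ)ˣ) : Matrix (Fin n) (Fin n) ℤ)ᵀ := by rw [ha1]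
        _ = (((a⁻¹ : (Matrix (Fin n) (Fin n) ℤ)ˣ) : Matrix (Fin n) (Fin n) ℤ) * (a : Matrix (Fin n) (Fin n) ℤ)) * Q * ((a : Matrix (Fin n) (Fin n) ℤ)ᵀ * ((a⁻¹ : (Matrix (Fin n) (Fin n) ℤ)ˣ) : Matrix (Fin n) (Fin n) ℤ)ᵀ) := by noncomm_ring
        _ = Q := by rw [h1, h2, Matrix.one_mul, Matrix.mul_one]
    have hi2 : ((a⁻¹ : (Matrix (Fin n) (Fin n) ℤ)ˣ) : Matrix (Fin n) (Fin n) ℤ).det = 1 := by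
      have := Matrix.det_mul ((a⁻¹ : (Matrix (Fin n) (Fin n) ℤ)ˣ) : Matrix (Fin n) (Fin n) ℤ) (a : Matrix (Fin n) (Fin n) ℤ)
      rw [Units.inv_mul, Matrix.det_one, ha2, mul_one] at this
      exact this.symm
    refine ⟨hi1, hi2, fun x hx => ?_⟩
    have hy := dual_pres Q a⁻¹ hi1 hx
    set y := Matrix.vecMul x (((a⁻¹ : (Matrix (Fin n) (Fin n) ℤ)ˣ) : Matrix (Fin n) (Fin n) ℤ).map ((↑) : ℤ → ℚ)) with hydef
    have h1 : IsIntVec (Matrix.vecMul y ((a : Matrix (Fin n) (Fin n) ℤ).map ((↑) : ℤ → ℚ)) - y) :=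
      ha3 y hy
    have hyx : Matrix.vecMul y ((a : Matrix (Fin n) (Fin n) ℤ).map ((↑) : ℤ → ℚ)) = x := by
      rw [hydef, Matrix.vecMul_vecMul, ← mapq_mul, Units.inv_mul, mapq_one, Matrix.vecMul_one]
    rw [hyx] at h1
    have : y - x = -(x - y) := by abel
    rw [this]
    exact h1.neg


/-- The Gram matrix of the A₃ root lattice. -/
def QA3 : Matrix (Fin 3) (Fin 3) ℤ := !![2,-1,0; -1,2,-1; 0,-1,2]


section A3Aux

open Equiv

def rA : Fin 3 → ℤ := ![3,2,1]

def KA : Matrix (Fin 3) (Fin 3) ℤ := !![3,2,1; 2,4,2; 1,2,3]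

def PA (U : Matrix (Fin 3) (Fin 3) ℤ) : Prop :=
  U * QA3 * Uᵀ = QA3 ∧ U.det = 1 ∧ ∀ j, (4:ℤ) ∣ (Matrix.vecMul rA U - rA) j

instance : DecidablePred PA := fun U => by unfold PA; infer_instance

def Arep (σ : Equiv.Perm (Fin 4)) : Matrix (Fin 3) (Fin 3) ℤ :=
  Matrix.of fun i j =>
    (if (σ (Fin.castSucc i) : ℕ) ≤ (j : ℕ) then 1 else 0) -
    (if (σ (Fin.succ i) : ℕ) ≤ (j : ℕ) then 1 else 0)

lemma Arep_one : Arep 1 = 1 := by decide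

lemma Arep_mul : ∀ σ τ : Equiv.Perm (Fin 4), Arep (σ * τ) = Arep τ * Arep σ := by decide

lemma Arep_inj : ∀ σ τ : Equiv.Perm (Fin 4), Arep σ = Arep τ → σ = τ := by decide

lemma PA_Arep : ∀ σ : Equiv.Perm (Fin 4), Equiv.Perm.sign σ = 1 → PA (Arep σ) := by decide

lemma mem_SOzero_iff (U : (Matrix (Fin 3) (Fin 3) ℤ)ˣ) : U ∈ SOzero QA3 ↔ PA U.val := by
  constructor
  · rintro ⟨h1, h2, h3⟩
    refine ⟨h1, h2, ?_⟩
    intro j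
    have hw : Matrix.vecMul (fun k => (rA k : ℚ)/4) (QA3.map ((↑) : ℤ → ℚ)) = ![1,0,0] := by
      funext l
      fin_cases l <;>
        simp [Matrix.vecMul, dotProduct, Fin.sum_univ_three, QA3, rA,
          Matrix.map_apply] <;>
        norm_num
    have hiw : IsIntVec (Matrix.vecMul (fun k => (rA k : ℚ)/4) (QA3.map ((↑) : ℤ → ℚ))) := by
      rw [hw]; intro l; fin_cases l
      · exact ⟨1, by norm_num⟩
      · exact ⟨0, by norm_num⟩
      · exact ⟨0, by norm_num⟩
    obtain ⟨c, hc⟩ := h3 _ hiw j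
    have key : ((Matrix.vecMul rA U.val - rA) j : ℚ) = 4 * (c : ℚ) := by
      simp only [Pi.sub_apply, Matrix.vecMul, dotProduct, Fin.sum_univ_three,
        Matrix.map_apply] at hc ⊢
      push_cast
      linarith
    have : (Matrix.vecMul rA U.val - rA) j = 4 * c := by exact_mod_cast key
    exact ⟨c, this⟩
  · rintro ⟨h1, h2, h3⟩
    refine ⟨h1, h2, ?_⟩
    intro x hx
    choose c hc using hx
    have hZ : QA3 * KA = Matrix.diagonal (fun _ => (4:ℤ)) := by decide
    have hKQ : (QA3.map ((↑) : ℤ → ℚ)) * (KA.map ((↑) : ℤ → ℚ))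
        = Matrix.diagonal (fun _ => (4:ℚ)) := by
      rw [← mapq_mul, hZ, Matrix.diagonal_map (by norm_num)]
      norm_num
    have h4x : (fun j => (4:ℚ) * x j)
        = Matrix.vecMul (fun k => (c k : ℚ)) (KA.map ((↑) : ℤ → ℚ)) := by
      have h1' : Matrix.vecMul x (QA3.map ((↑) : ℤ → ℚ)) = fun k => (c k : ℚ) := funext hc
      rw [← h1', Matrix.vecMul_vecMul, hKQ]
      funext j
      rw [Matrix.vecMul_diagonal]
      ring
    have hx4 : ∀ k, (4:ℚ) * x k
        = (c 0 : ℚ) * ((KA 0 k : ℤ) : ℚ) + (c 1 : ℚ) * ((KA 1 k : ℤ) : ℚ)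
          + (c 2 : ℚ) * ((KA 2 k : ℤ) : ℚ) := by
      intro k
      have := congrFun h4x k
      simpa [Matrix.vecMul, dotProduct, Fin.sum_univ_three, Matrix.map_apply] using this
    have hdvd : ∀ k j, (4:ℤ) ∣ (KA * U.val - KA) k j := by
      have e0 := h3 0; have e1 := h3 1; have e2 := h3 2
      simp only [Pi.sub_apply, Matrix.vecMul, dotProduct, Fin.sum_univ_three, rA,
        Matrix.cons_val_zero, Matrix.cons_val_one, Matrix.cons_val_two, Matrix.head_cons,
        Matrix.tail_cons] at e0 e1 e2
      intro k j
      fin_cases k <;> fin_cases j <;>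
        simp only [show ((⟨2, by omega⟩ : Fin 3)) = 2 from rfl, Fin.zero_eta, Fin.mk_one,
          Matrix.sub_apply, Matrix.mul_apply, Fin.sum_univ_three, KA, Matrix.of_apply,
          Matrix.cons_val', Matrix.cons_val_zero, Matrix.cons_val_one, Matrix.cons_val_two,
          Matrix.head_cons, Matrix.tail_cons, Matrix.empty_val', Matrix.cons_val_fin_one,
          Matrix.head_fin_const, Fin.isValue] <;>
        omega
    set D : Matrix (Fin 3) (Fin 3) ℤ := Matrix.of fun k j => (KA * U.val - KA) k j / 4 with hDdef
    have hD : ∀ i j, (KA * U.val - KA) i j = 4 * D i j := by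
      intro i j
      simp only [hDdef, Matrix.of_apply]
      exact (Int.mul_ediv_cancel' (hdvd i j)).symm
    have hDq : ∀ i j, ((KA i 0 : ℤ) : ℚ) * (U.val 0 j : ℚ) + ((KA i 1 : ℤ) : ℚ) * (U.val 1 j : ℚ)
        + ((KA i 2 : ℤ) : ℚ) * (U.val 2 j : ℚ) - ((KA i j : ℤ) : ℚ)
        = 4 * ((D i j : ℤ) : ℚ) := by
      intro i j
      have h := hD i j
      simp only [Matrix.sub_apply, Matrix.mul_apply, Fin.sum_univ_three] at h
      exact_mod_cast h
    intro j
    refine ⟨c 0 * D 0 j + c 1 * D 1 j + c 2 * D 2 j, ?_⟩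
    have e0 := hx4 0
    have e1 := hx4 1
    have e2 := hx4 2
    have ej := hx4 j
    have d0 := hDq 0 j
    have d1 := hDq 1 j
    have d2 := hDq 2 j
    simp only [Pi.sub_apply, Matrix.vecMul, dotProduct, Fin.sum_univ_three,
      Matrix.map_apply]
    push_cast
    linear_combination ((U.val 0 j : ℤ) : ℚ)/4 * e0 + ((U.val 1 j : ℤ) : ℚ)/4 * e1
      + ((U.val 2 j : ℤ) : ℚ)/4 * e2 + ((c 0 : ℤ) : ℚ)/4 * d0 + ((c 1 : ℤ) : ℚ)/4 * d1
      + ((c 2 : ℤ) : ℚ)/4 * d2 - (1/4) * ej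

def rootL : List (ℤ × ℤ × ℤ) :=
  [(1,0,0),(-1,0,0),(0,1,0),(0,-1,0),(0,0,1),(0,0,-1),
   (1,1,0),(-1,-1,0),(0,1,1),(0,-1,-1),(1,1,1),(-1,-1,-1)]

lemma rootDec : ∀ a ∈ Finset.Icc (-1:ℤ) 1, ∀ b ∈ Finset.Icc (-2:ℤ) 2, ∀ c ∈ Finset.Icc (-1:ℤ) 1,
    a^2 + (a-b)^2 + (b-c)^2 + c^2 = 2 → (a,b,c) ∈ rootL := by decide

lemma rowMem (a b c : ℤ) (h : a^2 + (a-b)^2 + (b-c)^2 + c^2 = 2) : (a,b,c) ∈ rootL := by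
  have h1 : 2*a ≤ 3 := by nlinarith [sq_nonneg (a-1), sq_nonneg (a-b), sq_nonneg (b-c), sq_nonneg c]
  have h2 : -3 ≤ 2*a := by nlinarith [sq_nonneg (a+1), sq_nonneg (a-b), sq_nonneg (b-c), sq_nonneg c]
  have h3 : 2*c ≤ 3 := by nlinarith [sq_nonneg (c-1), sq_nonneg (a-b), sq_nonneg (b-c), sq_nonneg a]
  have h4 : -3 ≤ 2*c := by nlinarith [sq_nonneg (c+1), sq_nonneg (a-b), sq_nonneg (b-c), sq_nonneg a]
  have h5 : 2*(a-b) ≤ 3 := by nlinarith [sq_nonneg (a-b-1), sq_nonneg a, sq_nonneg (b-c), sq_nonneg c]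
  have h6 : -3 ≤ 2*(a-b) := by nlinarith [sq_nonneg (a-b+1), sq_nonneg a, sq_nonneg (b-c), sq_nonneg c]
  exact rootDec a (by simp [Finset.mem_Icc]; omega) b (by simp [Finset.mem_Icc]; omega)
    c (by simp [Finset.mem_Icc]; omega) h

lemma diag_root (U : Matrix (Fin 3) (Fin 3) ℤ) (h : U * QA3 * Uᵀ = QA3) (i : Fin 3) :
    (U i 0)^2 + (U i 0 - U i 1)^2 + (U i 1 - U i 2)^2 + (U i 2)^2 = 2 := by
  have hQ2 : QA3 i i = 2 := by fin_cases i <;> decide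
  have hd : (U * QA3 * Uᵀ) i i = 2 := (congrFun (congrFun h i) i).trans hQ2
  simp only [Matrix.mul_apply, Fin.sum_univ_three, Matrix.transpose_apply, QA3, Matrix.of_apply,
    Matrix.cons_val', Matrix.cons_val_zero, Matrix.cons_val_one, Matrix.cons_val_two,
    Matrix.head_cons, Matrix.tail_cons, Matrix.empty_val', Matrix.cons_val_fin_one,
    Matrix.head_fin_const] at hd
  linear_combination hd

lemma keyRoots : ∀ x ∈ rootL, ∀ y ∈ rootL, ∀ z ∈ rootL,
    PA !![x.1, x.2.1, x.2.2; y.1, y.2.1, y.2.2; z.1, z.2.1, z.2.2] →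
    ∃ σ : Equiv.Perm (Fin 4), Equiv.Perm.sign σ = 1 ∧
      !![x.1, x.2.1, x.2.2; y.1, y.2.1, y.2.2; z.1, z.2.1, z.2.2] = Arep σ := by decide

def Φ : Equiv.Perm (Fin 4) →* (Matrix (Fin 3) (Fin 3) ℤ)ˣ where
  toFun σ := ⟨Arep σ⁻¹, Arep σ,
    by rw [← Arep_mul, mul_inv_cancel, Arep_one],
    by rw [← Arep_mul, inv_mul_cancel, Arep_one]⟩
  map_one' := Units.ext (by simp [Arep_one])
  map_mul' σ τ := Units.ext (by simp [_root_.mul_inv_rev, Arep_mul])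

lemma Φ_mem {σ : Equiv.Perm (Fin 4)} (h : σ ∈ alternatingGroup (Fin 4)) :
    Φ σ ∈ SOzero QA3 := by
  rw [mem_SOzero_iff]
  exact PA_Arep σ⁻¹ (by rw [map_inv, Equiv.Perm.mem_alternatingGroup.mp h, inv_one])

def ψ : ↥(alternatingGroup (Fin 4)) →* ↥(SOzero QA3) :=
  (Φ.comp (alternatingGroup (Fin 4)).subtype).codRestrict _ (fun s => Φ_mem s.2)

lemma ψ_inj : Function.Injective ψ := by
  intro s t h
  have h1 : Φ ↑s = Φ ↑t := congrArg Subtype.val h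
  have h2 : Arep (↑s : Equiv.Perm (Fin 4))⁻¹ = Arep (↑t : Equiv.Perm (Fin 4))⁻¹ :=
    congrArg Units.val h1
  exact Subtype.ext (inv_injective (Arep_inj _ _ h2))

lemma ψ_surj : Function.Surjective ψ := by
  rintro ⟨U, hU⟩
  have hP : PA U.val := (mem_SOzero_iff U).1 hU
  have hrow : ∀ i : Fin 3, ((U.val i 0, U.val i 1, U.val i 2)) ∈ rootL := fun i =>
    rowMem _ _ _ (diag_root U.val hP.1 i)
  have hM : U.val = !![U.val 0 0, U.val 0 1, U.val 0 2; U.val 1 0, U.val 1 1, U.val 1 2;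
      U.val 2 0, U.val 2 1, U.val 2 2] := by
    ext i j; fin_cases i <;> fin_cases j <;> rfl
  obtain ⟨σ, hsgn, heq⟩ := keyRoots _ (hrow 0) _ (hrow 1) _ (hrow 2) (by rw [← hM]; exact hP)
  have hUv : U.val = Arep σ := hM.trans heq
  refine ⟨⟨σ⁻¹, ?_⟩, ?_⟩
  · rw [Equiv.Perm.mem_alternatingGroup, map_inv, hsgn, inv_one]
  · apply Subtype.ext
    apply Units.ext
    show Arep σ⁻¹⁻¹ = U.val
    rw [inv_inv, hUv]

end A3Aux

theorem statement14 :
    Nonempty (↥(SOzero QA3) ≃* ↥(alternatingGroup (Fin 4))) ∧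
    Nat.card ↥(SOzero QA3) = 12 := by
  have hbij : Function.Bijective ψ := ⟨ψ_inj, ψ_surj⟩
  have e := MulEquiv.ofBijective ψ hbij
  refine ⟨⟨e.symm⟩, ?_⟩
  rw [Nat.card_congr e.symm.toEquiv, Nat.card_eq_fintype_card]
  have h2 : 2 * Fintype.card ↥(alternatingGroup (Fin 4)) = 24 := by
    have h := two_mul_card_alternatingGroup (α := Fin 4)
    rw [Fintype.card_perm, Fintype.card_fin] at h
    exact h.trans rfl
  omega
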